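/- Let f : ℝⁿ × ℝⁿ → ℂ be a Schwartz function. Then the integral over x ∈ ℝⁿ of ((Δ_{x₁} - Δ_{x₂}) f)(x, x) dx equals zero, where Δ_{x₁} is the Laplacian in the first n variables and Δ_{x₂} is the Laplacian in the second n variables. -/

import Mathlib

open MeasureTheory

variable {n : ℕ}

lemma integral_fderiv_schwartz (g : SchwartzMap (Fin n → ℝ) ℂ) (v : Fin n → ℝ) :
    ∫ x : Fin n → ℝ, fderiv ℝ g x v = 0 := by
  set L : (Fin n → ℝ) →L[ℝ] (Fin n → ℝ) →L[ℝ] ℝ := 0 with hL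
  have hint : Integrable (fun x => fderiv ℝ g x) (volume : Measure (Fin n → ℝ)) := by
    have := (SchwartzMap.fderivCLM ℝ (Fin n → ℝ) ℂ g).integrable (μ := (volume : Measure (Fin n → ℝ)))
    exact this
  have key := VectorFourier.fourierIntegral_fderiv (E := ℂ) L g.integrable g.differentiable hint
  have h0 := congrFun key 0
  rw [VectorFourier.fourierIntegral] at h0
  simp only [hL, ContinuousLinearMap.toLinearMap₁₂_apply_apply_apply, ContinuousLinearMap.zero_apply,
    neg_zero, map_zero] at h0
  have : ∫ x : Fin n → ℝ, fderiv ℝ g x = 0 := by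
    simp only [AddChar.map_zero_eq_one, one_smul] at h0
    rw [show (∫ x : Fin n → ℝ, fderiv ℝ (⇑g) x)
        = ∫ x : Fin n → ℝ, fderiv ℝ (⇑g) x ∂volume from rfl, h0]
    ext y
    simp [VectorFourier.fourierSMulRight]
  calc ∫ x : Fin n → ℝ, fderiv ℝ g x v
      = (∫ x : Fin n → ℝ, fderiv ℝ g x) v := (ContinuousLinearMap.integral_apply hint v).symm
    _ = 0 := by rw [this]; rfl

/-- The diagonal map as a CLM. -/
noncomputable def diagCLM (n : ℕ) : (Fin n → ℝ) →L[ℝ] ((Fin n → ℝ) × (Fin n → ℝ)) :=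
  (ContinuousLinearMap.id ℝ _).prod (ContinuousLinearMap.id ℝ _)

lemma diag_upper : ∃ (k : ℕ) (C : ℝ), ∀ x : Fin n → ℝ, ‖x‖ ≤ C * (1 + ‖diagCLM n x‖) ^ k := by
  refine ⟨1, 1, fun x => ?_⟩
  have h1 : ‖x‖ ≤ ‖diagCLM n x‖ := le_max_left _ _
  nlinarith [norm_nonneg x]

noncomputable def gmap (f : SchwartzMap ((Fin n → ℝ) × (Fin n → ℝ)) ℂ) (i : Fin n) :
    SchwartzMap (Fin n → ℝ) ℂ :=
  SchwartzMap.compCLM ℝ (diagCLM n).hasTemperateGrowth diag_upper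
    (LineDeriv.lineDerivOpCLM ℝ (SchwartzMap ((Fin n → ℝ) × (Fin n → ℝ)) ℂ) ((Pi.single i 1 : Fin n → ℝ), -(Pi.single i 1 : Fin n → ℝ)) f)

example (f : SchwartzMap ((Fin n → ℝ) × (Fin n → ℝ)) ℂ) (i : Fin n) (x : Fin n → ℝ) :
    gmap f i x = fderiv ℝ f (x, x)
      ((Pi.single i 1 : Fin n → ℝ), -(Pi.single i 1 : Fin n → ℝ)) := by
  simp [gmap, diagCLM, LineDeriv.lineDerivOpCLM_apply, SchwartzMap.lineDerivOp_apply_eq_fderiv]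

/-- The Laplacian in the first group of `n` variables, `Δ_{x₁} f`, of a function
`f : ℝⁿ × ℝⁿ → ℂ`. -/
noncomputable def lapFst (n : ℕ) (f : ((Fin n → ℝ) × (Fin n → ℝ)) → ℂ)
    (p : (Fin n → ℝ) × (Fin n → ℝ)) : ℂ :=
  ∑ i : Fin n,
    fderiv ℝ (fun q => fderiv ℝ f q ((Pi.single i 1 : Fin n → ℝ), 0)) p
      ((Pi.single i 1 : Fin n → ℝ), 0)

/-- The Laplacian in the second group of `n` variables, `Δ_{x₂} f`. -/
noncomputable def lapSnd (n : ℕ) (f : ((Fin n → ℝ) × (Fin n → ℝ)) → ℂ)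
    (p : (Fin n → ℝ) × (Fin n → ℝ)) : ℂ :=
  ∑ i : Fin n,
    fderiv ℝ (fun q => fderiv ℝ f q (0, (Pi.single i 1 : Fin n → ℝ))) p
      (0, (Pi.single i 1 : Fin n → ℝ))

variable {n : ℕ}

lemma pointwise_key (f : SchwartzMap ((Fin n → ℝ) × (Fin n → ℝ)) ℂ) (x : Fin n → ℝ) :
    lapFst n f (x, x) - lapSnd n f (x, x)
      = ∑ i : Fin n, fderiv ℝ (gmap f i) x (Pi.single i 1) := by
  set p : (Fin n → ℝ) × (Fin n → ℝ) := (x, x) with hp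
  set D2 := fderiv ℝ (fderiv ℝ (⇑f)) p with hD2
  have hderiv : ∀ q, HasFDerivAt (⇑f) (fderiv ℝ (⇑f) q) q :=
    fun q => f.differentiableAt.hasFDerivAt
  have hC : ContDiff ℝ (⊤ : ℕ∞) (fderiv ℝ (⇑f)) := (contDiff_infty_iff_fderiv.mp (f.smooth ⊤)).2
  have h2 : HasFDerivAt (fderiv ℝ (⇑f)) D2 p :=
    (hC.differentiable (by simp) p).hasFDerivAt
  have hsymm : ∀ v w, D2 v w = D2 w v := fun v w =>
    second_derivative_symmetric hderiv h2 v w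
  -- fderiv of directional derivative
  have step : ∀ (v w : (Fin n → ℝ) × (Fin n → ℝ)),
      fderiv ℝ (fun q => fderiv ℝ (⇑f) q v) p w = D2 w v := by
    intro v w
    have h3 : HasFDerivAt (fun q => fderiv ℝ (⇑f) q v)
        ((ContinuousLinearMap.apply ℝ ℂ v).comp D2) p :=
      (ContinuousLinearMap.apply ℝ ℂ v).hasFDerivAt.comp p h2
    rw [h3.fderiv]
    rfl
  -- fderiv of gmap
  have hg : ∀ (i : Fin n),
      fderiv ℝ (⇑(gmap f i)) x (Pi.single i 1)
        = D2 ((Pi.single i 1 : Fin n → ℝ), (Pi.single i 1 : Fin n → ℝ))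
            ((Pi.single i 1 : Fin n → ℝ), -(Pi.single i 1 : Fin n → ℝ)) := by
    intro i
    set w : (Fin n → ℝ) × (Fin n → ℝ) :=
      ((Pi.single i 1 : Fin n → ℝ), -(Pi.single i 1 : Fin n → ℝ)) with hw
    have heq : ⇑(gmap f i) = (fun q => fderiv ℝ (⇑f) q w) ∘ (fun y : Fin n → ℝ => ((y, y) : (Fin n → ℝ) × (Fin n → ℝ))) := by
      funext y
      simp [gmap, LineDeriv.lineDerivOpCLM_apply, SchwartzMap.lineDerivOp_apply_eq_fderiv, diagCLM, Function.comp, hw]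
    have h3 : HasFDerivAt (fun q => fderiv ℝ (⇑f) q w)
        ((ContinuousLinearMap.apply ℝ ℂ w).comp D2) p :=
      (ContinuousLinearMap.apply ℝ ℂ w).hasFDerivAt.comp p h2
    have hd : HasFDerivAt (fun y : Fin n → ℝ => ((y, y) : (Fin n → ℝ) × (Fin n → ℝ)))
        (diagCLM n) x := (diagCLM n).hasFDerivAt
    have h4 : HasFDerivAt (⇑(gmap f i))
        (((ContinuousLinearMap.apply ℝ ℂ w).comp D2).comp (diagCLM n)) x := by
      rw [heq]
      exact HasFDerivAt.comp (f := fun y : Fin n → ℝ => ((y, y) : (Fin n → ℝ) × (Fin n → ℝ))) x h3 hd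
    rw [h4.fderiv]
    rfl
  rw [lapFst, lapSnd, ← Finset.sum_sub_distrib]
  refine Finset.sum_congr rfl fun i _ => ?_
  rw [step, step, hg]
  set e : Fin n → ℝ := Pi.single i 1
  have hsplit1 : ((e, e) : (Fin n → ℝ) × (Fin n → ℝ)) = (e, 0) + (0, e) := by
    simp [Prod.ext_iff]
  have hsplit2 : ((e, -e) : (Fin n → ℝ) × (Fin n → ℝ)) = (e, 0) - (0, e) := by
    simp [Prod.ext_iff, sub_eq_add_neg]
  rw [hsplit1, hsplit2, map_add, ContinuousLinearMap.add_apply, map_sub, map_sub]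
  have := hsymm (e, 0) (0, e)
  ring_nf
  rw [this]
  ring

/-- For a Schwartz function `f : ℝⁿ × ℝⁿ → ℂ`, the integral of
`((Δ_{x₁} - Δ_{x₂}) f)(x, x)` over `x ∈ ℝⁿ` vanishes. -/
theorem stmt_0 (n : ℕ) (f : SchwartzMap ((Fin n → ℝ) × (Fin n → ℝ)) ℂ) :
    ∫ x : Fin n → ℝ, (lapFst n f (x, x) - lapSnd n f (x, x)) = 0 := by
  have hint : ∀ i : Fin n,
      Integrable (fun x : Fin n → ℝ => fderiv ℝ (gmap f i) x (Pi.single i 1)) volume := by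
    intro i
    have := (LineDeriv.lineDerivOpCLM ℝ (SchwartzMap (Fin n → ℝ) ℂ) (Pi.single i 1 : Fin n → ℝ) (gmap f i)).integrable
      (μ := (volume : Measure (Fin n → ℝ)))
    exact this
  calc ∫ x : Fin n → ℝ, (lapFst n f (x, x) - lapSnd n f (x, x))
      = ∫ x : Fin n → ℝ, ∑ i : Fin n, fderiv ℝ (gmap f i) x (Pi.single i 1) := by
        simp_rw [pointwise_key]
    _ = ∑ i : Fin n, ∫ x : Fin n → ℝ, fderiv ℝ (gmap f i) x (Pi.single i 1) :=
        integral_finset_sum _ fun i _ => hint i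
    _ = 0 := by
        simp [integral_fderiv_schwartz]
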